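/- Let Z = (E, G, τ, σ) be a zip datum and x ∈ G. The map Ψ : G_1^x → τ(E) x σ(E), y ↦ yx, maps Z_1^x-equivalence classes in G_1^x = τ(E) bijectively onto Z-equivalence classes contained in the double coset τ(E) x σ(E). -/

import Mathlib

variable {E G : Type*} [Group E] [Group G]

/-- The conjugated homomorphism ˣσ : e ↦ x σ(e) x⁻¹. -/
def conjHom (x : G) (σ : E →* G) : E →* G :=
  ((MulAut.conj x).toMonoidHom).comp σ

/-- The first refinement group E₁ = σ⁻¹(τ(E)). -/
def Eone (τ σ : E →* G) : Subgroup E :=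
  Subgroup.comap σ (Subgroup.map τ ⊤)

/-- E₁ˣ = (ˣσ)⁻¹(τ(E)). -/
def EoneX (τ σ : E →* G) (x : G) : Subgroup E :=
  Eone τ (conjHom x σ)

/-- The iterated refinements Eᵢ. -/
def Eseq (τ σ : E →* G) : ℕ → Subgroup E
  | 0 => ⊤
  | n + 1 => Subgroup.comap σ (Subgroup.map τ (Eseq τ σ n))

/-- The iterated refinements Gᵢ. -/
def Gseq (τ σ : E →* G) : ℕ → Subgroup G
  | 0 => ⊤
  | n + 1 => Subgroup.map τ (Eseq τ σ n)

/-- E∞: the largest subgroup F of E with σ(F) ⊆ τ(F). -/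
def Einf (τ σ : E →* G) : Subgroup E :=
  sSup {F : Subgroup E | Subgroup.map σ F ≤ Subgroup.map τ F}

/-- G∞ = τ(E∞). -/
def Ginf (τ σ : E →* G) : Subgroup G :=
  Subgroup.map τ (Einf τ σ)

/-- E∞ˣ: the largest subgroup F of E with ˣσ(F) ⊆ τ(F). -/
def EinfX (τ σ : E →* G) (x : G) : Subgroup E :=
  Einf τ (conjHom x σ)

/-- G∞ˣ = τ(E∞ˣ). -/
def GinfX (τ σ : E →* G) (x : G) : Subgroup G :=
  Subgroup.map τ (EinfX τ σ x)

/-- The ∼_Z-equivalence class of x : all τ(e) g x σ(e)⁻¹ with e ∈ E, g ∈ G∞ˣ. -/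
def zipOrbit (τ σ : E →* G) (x : G) : Set G :=
  {y | ∃ e : E, ∃ g ∈ GinfX τ σ x, y = τ e * g * x * (σ e)⁻¹}

/-- G₁ = τ(E) as a subgroup of G. -/
def Gone (τ : E →* G) : Subgroup G := Subgroup.map τ ⊤

/-- The restriction τ : E₁ˣ →* G₁ of the refined zip datum Z₁ˣ. -/
def tauOne (τ σ : E →* G) (x : G) : (EoneX τ σ x) →* (Gone τ) :=
  MonoidHom.codRestrict (τ.comp (EoneX τ σ x).subtype) (Gone τ)
    (fun e => ⟨e.1, trivial, rfl⟩)

/-- The restriction ˣσ : E₁ˣ →* G₁ of the refined zip datum Z₁ˣ. -/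
def sigmaOne (τ σ : E →* G) (x : G) : (EoneX τ σ x) →* (Gone τ) :=
  MonoidHom.codRestrict ((conjHom x σ).comp (EoneX τ σ x).subtype) (Gone τ)
    (fun e => e.2)


lemma conjHom_apply (x : G) (σ : E →* G) (e : E) : conjHom x σ e = x * σ e * x⁻¹ := rfl

lemma le_einf {τ σ : E →* G} {F : Subgroup E}
    (h : Subgroup.map σ F ≤ Subgroup.map τ F) : F ≤ Einf τ σ := le_sSup h

lemma einf_spec (τ σ : E →* G) :
    Subgroup.map σ (Einf τ σ) ≤ Subgroup.map τ (Einf τ σ) := by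
  rw [Einf, (Subgroup.gc_map_comap σ).l_sSup]
  exact iSup_le fun F => iSup_le fun hF =>
    hF.trans (Subgroup.map_mono (le_sSup hF))

lemma mem_einf {τ σ : E →* G} {a : E} :
    a ∈ Einf τ σ ↔ ∃ F : Subgroup E, Subgroup.map σ F ≤ Subgroup.map τ F ∧ a ∈ F :=
  ⟨fun h => ⟨Einf τ σ, einf_spec τ σ, h⟩, fun ⟨_, hF, ha⟩ => le_einf hF ha⟩

lemma ginf_equiv (τ σ : E →* G) (x : G) (y h : Gone τ) :
    h ∈ GinfX (tauOne τ σ x) (sigmaOne τ σ x) y ↔ (h : G) ∈ GinfX τ σ ((y : G) * x) := by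
  constructor
  · rintro ⟨f, hf, rfl⟩
    obtain ⟨F', hF', hfF'⟩ := mem_einf.mp hf
    set F : Subgroup E := F'.map (EoneX τ σ x).subtype with hFdef
    have hScond : Subgroup.map (conjHom ((y : G) * x) σ) F ≤ Subgroup.map τ F := by
      rintro a ⟨b, ⟨e, heF', rfl⟩, rfl⟩
      have key : conjHom ((y : G) * x) σ ((EoneX τ σ x).subtype e) =
          ((conjHom y (sigmaOne τ σ x)) e : G) := by
        show (y : G) * x * σ e * ((y : G) * x)⁻¹ = (y : G) * (x * σ e * x⁻¹) * (y : G)⁻¹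
        group
      rw [key]
      obtain ⟨f', hf'F', hf'⟩ := hF' ⟨e, heF', rfl⟩
      exact ⟨f'.1, ⟨f', hf'F', rfl⟩, by rw [← congrArg Subtype.val hf']; rfl⟩
    refine ⟨f.1, le_einf hScond ⟨f, hfF', rfl⟩, rfl⟩
  · rintro ⟨f, hf, hτf⟩
    set F : Subgroup E := Einf τ (conjHom ((y : G) * x) σ) with hFdef
    have hS := einf_spec τ (conjHom ((y : G) * x) σ)
    obtain ⟨cy, -, hcy⟩ := y.2
    have step1 : ∀ a ∈ F, a ∈ EoneX τ σ x := by
      intro a haF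
      obtain ⟨b, hbF, hb⟩ := hS ⟨a, haF, rfl⟩
      refine ⟨cy⁻¹ * b * cy, trivial, ?_⟩
      have : τ b = (y : G) * x * σ a * x⁻¹ * (y : G)⁻¹ := by
        rw [hb, conjHom_apply]; group
      rw [map_mul, map_mul, map_inv, this, hcy, conjHom_apply]; group
    set F' : Subgroup (EoneX τ σ x) := F.comap (EoneX τ σ x).subtype with hF'def
    have hS' : Subgroup.map (conjHom y (sigmaOne τ σ x)) F' ≤
        Subgroup.map (tauOne τ σ x) F' := by
      rintro a ⟨e, heF', rfl⟩
      obtain ⟨b, hbF, hb⟩ := hS ⟨e.1, heF', rfl⟩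
      refine ⟨⟨b, step1 b hbF⟩, hbF, ?_⟩
      apply Subtype.ext
      have : ((conjHom y (sigmaOne τ σ x)) e : G) =
          conjHom ((y : G) * x) σ e.1 := by
        show (y : G) * (x * σ e * x⁻¹) * (y : G)⁻¹ = (y : G) * x * σ e * ((y : G) * x)⁻¹
        group
      rw [this, ← hb]; rfl
    have hfF : f ∈ F := hf
    refine ⟨⟨f, step1 f hfF⟩, le_einf hS' hfF, ?_⟩
    exact Subtype.ext hτf

/-- the map y ↦ yx maps Z₁ˣ-equivalence classes in G₁ˣ = τ(E) bijectively
onto the Z-equivalence classes contained in the double coset τ(E) x σ(E). -/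
theorem zip_refinement_classes_bijective (τ σ : E →* G) (x : G) :
    (∀ y y' : Gone τ,
      (y' ∈ zipOrbit (tauOne τ σ x) (sigmaOne τ σ x) y ↔
        (y' : G) * x ∈ zipOrbit τ σ ((y : G) * x))) ∧
    (∀ y : Gone τ,
      zipOrbit τ σ ((y : G) * x) ⊆ {w : G | ∃ e et : E, w = τ e * x * σ et}) ∧
    (∀ w : G, (∃ e et : E, w = τ e * x * σ et) →
      ∃ y : Gone τ, w ∈ zipOrbit τ σ ((y : G) * x)) := by
  refine ⟨fun y y' => ⟨?_, ?_⟩, fun y w hw => ?_, fun w hw => ?_⟩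
  · rintro ⟨e, g, hg, heq⟩
    refine ⟨e.1, g.1, (ginf_equiv τ σ x y g).mp hg, ?_⟩
    have hc := congrArg Subtype.val heq
    have hcoe : (((tauOne τ σ x) e * g * y * ((sigmaOne τ σ x) e)⁻¹ : Gone τ) : G) =
        τ e.1 * g.1 * (y : G) * (x * σ e.1 * x⁻¹)⁻¹ := rfl
    rw [hcoe] at hc
    rw [hc]; group
  · rintro ⟨e, g, hg, heq⟩
    have hgG : g ∈ Gone τ := by
      obtain ⟨fg, -, rfl⟩ := hg
      exact ⟨fg, trivial, rfl⟩
    have hσe : σ e = ((y' : G) * x)⁻¹ * τ e * g * ((y : G) * x) := by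
      have h3 : (σ e)⁻¹ = ((y : G) * x)⁻¹ * g⁻¹ * (τ e)⁻¹ * ((y' : G) * x) := by
        rw [heq]; group
      rw [← inv_inv (σ e), h3]; group
    have heE : e ∈ EoneX τ σ x := by
      have h2 : x * σ e * x⁻¹ = (y' : G)⁻¹ * (τ e * g * (y : G)) := by
        rw [hσe]; group
      have : conjHom x σ e ∈ Gone τ := by
        rw [conjHom_apply, h2]
        exact Subgroup.mul_mem _ (Subgroup.inv_mem _ y'.2)
          (Subgroup.mul_mem _ (Subgroup.mul_mem _ ⟨e, trivial, rfl⟩ hgG) y.2)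
      exact this
    refine ⟨⟨e, heE⟩, ⟨g, hgG⟩, (ginf_equiv τ σ x y ⟨g, hgG⟩).mpr hg, ?_⟩
    apply Subtype.ext
    have hcoe : (((tauOne τ σ x) ⟨e, heE⟩ * ⟨g, hgG⟩ * y *
        ((sigmaOne τ σ x) ⟨e, heE⟩)⁻¹ : Gone τ) : G) =
        τ e * g * (y : G) * (x * σ e * x⁻¹)⁻¹ := rfl
    rw [hcoe]
    have : (y' : G) = ((y' : G) * x) * x⁻¹ := by group
    rw [this, heq]; group
  · obtain ⟨e, g, hg, rfl⟩ := hw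
    obtain ⟨fg, -, rfl⟩ := hg
    obtain ⟨ey, -, hey⟩ := y.2
    refine ⟨e * fg * ey, e⁻¹, ?_⟩
    rw [map_mul, map_mul, map_inv, hey]; group
  · obtain ⟨e, et, rfl⟩ := hw
    refine ⟨⟨τ (et * e), ⟨et * e, trivial, rfl⟩⟩, et⁻¹, 1, one_mem _, ?_⟩
    show τ e * x * σ et = τ et⁻¹ * 1 * (τ (et * e) * x) * (σ et⁻¹)⁻¹
    rw [map_mul, map_inv, map_inv]; group
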